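/- Under the construction of the nested intervals I_j = {θ ∈ [0,1/2] : −10η/q_{2j} ≤ 2θ − ((−k_j α) mod 1) ≤ −η/(10 q_{2j})}, with k_{j+1} = k_j + ⌊η q_{2j+1}/q_{2j}⌋ q_{2j} and the increments ((−k_{j+1}α) mod 1) − ((−k_jα) mod 1) ∈ [−η/q_{2j}, −η/(4 q_{2j})], one has I_{j+1} ⊆ I_j for all j ≥ j₀; consequently the intersection ⋂_{j≥j₀} I_j is a nonempty set of real numbers. -/

import Mathlib

/-- Distance from a real number to the nearest integer, ‖x‖_{ℝ/ℤ}. -/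
noncomputable def normZ (x : ℝ) : ℝ := |x - round x|

/-- The Gauss map. -/
noncomputable def cfGauss (x : ℝ) : ℝ := Int.fract x⁻¹

/-- Partial quotients of α ∈ (0,1): `cfA α n` is the paper's a_{n+1}. -/
noncomputable def cfA (α : ℝ) (n : ℕ) : ℤ := ⌊(cfGauss^[n] α)⁻¹⌋

/-- Continued fraction denominators: q_0 = 1, q_1 = a_1, q_{n+2} = a_{n+2} q_{n+1} + q_n. -/
noncomputable def cfQ (α : ℝ) : ℕ → ℤ
  | 0 => 1
  | 1 => cfA α 0
  | (n + 2) => cfA α (n + 1) * cfQ α (n + 1) + cfQ α n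

/-- Continued fraction numerators: p_0 = 0, p_1 = 1, p_{n+2} = a_{n+2} p_{n+1} + p_n. -/
noncomputable def cfP (α : ℝ) : ℕ → ℤ
  | 0 => 0
  | 1 => 1
  | (n + 2) => cfA α (n + 1) * cfP α (n + 1) + cfP α n

/-- The interval I_j of the construction. -/
noncomputable def resInterval (α η : ℝ) (qval kj : ℤ) : Set ℝ :=
  {θ : ℝ | θ ∈ Set.Icc (0 : ℝ) (1 / 2) ∧
    -10 * η / (qval : ℝ) ≤ 2 * θ - Int.fract (-(kj : ℝ) * α) ∧
    2 * θ - Int.fract (-(kj : ℝ) * α) ≤ -η / (10 * (qval : ℝ))}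

lemma gauss_iter_mem (α : ℝ) (hα : Irrational α) (h0 : 0 < α) (h1 : α < 1) (n : ℕ) :
    Irrational (cfGauss^[n] α) ∧ 0 < cfGauss^[n] α ∧ cfGauss^[n] α < 1 := by
  induction n with
  | zero => exact ⟨hα, h0, h1⟩
  | succ n ih =>
    obtain ⟨hi, hp, hl⟩ := ih
    rw [Function.iterate_succ_apply']
    have hfi : Irrational (cfGauss (cfGauss^[n] α)) := by
      rw [cfGauss, Int.fract]; exact hi.inv.sub_intCast _
    have hne : Int.fract (cfGauss^[n] α)⁻¹ ≠ 0 := by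
      simpa [cfGauss] using hfi.ne_int 0
    exact ⟨hfi, lt_of_le_of_ne (Int.fract_nonneg _) (Ne.symm hne), Int.fract_lt_one _⟩

lemma cfA_one_le (α : ℝ) (hα : Irrational α) (h0 : 0 < α) (h1 : α < 1) (n : ℕ) :
    1 ≤ cfA α n := by
  obtain ⟨_, hp, hl⟩ := gauss_iter_mem α hα h0 h1 n
  have : (1 : ℝ) ≤ (cfGauss^[n] α)⁻¹ := le_inv_of_le_inv₀ hp (by simpa using hl.le)
  exact Int.le_floor.mpr (by exact_mod_cast this)

lemma cfQ_pos_mono (α : ℝ) (hα : Irrational α) (h0 : 0 < α) (h1 : α < 1) :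
    ∀ n, 1 ≤ cfQ α n ∧ cfQ α n ≤ cfQ α (n + 1) := by
  intro n
  induction n with
  | zero =>
    simp only [cfQ]
    exact ⟨le_refl 1, cfA_one_le α hα h0 h1 0⟩
  | succ n ih =>
    obtain ⟨h1n, h2n⟩ := ih
    have ha := cfA_one_le α hα h0 h1 (n + 1)
    have hq1 : 1 ≤ cfQ α (n + 1) := le_trans h1n h2n
    constructor
    · exact hq1
    · show cfQ α (n + 1) ≤ cfA α (n + 1) * cfQ α (n + 1) + cfQ α n
      nlinarith

lemma cfQ_step (α : ℝ) (hα : Irrational α) (h0 : 0 < α) (h1 : α < 1) (m : ℕ) :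
    2 * cfQ α m ≤ cfQ α (m + 2) := by
  have h1m := (cfQ_pos_mono α hα h0 h1 m).1
  have h2m := (cfQ_pos_mono α hα h0 h1 m).2
  have ha := cfA_one_le α hα h0 h1 (m + 1)
  have hq1 : 1 ≤ cfQ α (m + 1) := le_trans h1m h2m
  show 2 * cfQ α m ≤ cfA α (m + 1) * cfQ α (m + 1) + cfQ α m
  nlinarith

/-- the intervals I_j are nested and have nonempty intersection. -/
theorem stmt9 (α η : ℝ) (hα : Irrational α) (h0 : 0 < α) (h1 : α < 1)
    (hη0 : 0 < η) (hη1 : η ≤ 1 / 100) (j₀ : ℕ) (k : ℕ → ℤ)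
    (hk₀ : Int.fract (-(k j₀ : ℝ) * α) ∈ Set.Icc (1 / 10 : ℝ) (1 / 5))
    (hkrec : ∀ j, j₀ ≤ j →
      k (j + 1) = k j + ⌊η * (cfQ α (2 * j + 1) : ℝ) / (cfQ α (2 * j) : ℝ)⌋ * cfQ α (2 * j))
    (hgap : ∀ j, j₀ ≤ j → 10 ^ 17 * (cfQ α (2 * j) : ℝ) ≤ η * (cfQ α (2 * j + 1) : ℝ))
    (hincr : ∀ j, j₀ ≤ j →
      Int.fract (-(k (j + 1) : ℝ) * α) - Int.fract (-(k j : ℝ) * α)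
        ∈ Set.Icc (-η / (cfQ α (2 * j) : ℝ)) (-η / (4 * (cfQ α (2 * j) : ℝ)))) :
    (∀ j, j₀ ≤ j →
      resInterval α η (cfQ α (2 * (j + 1))) (k (j + 1)) ⊆ resInterval α η (cfQ α (2 * j)) (k j))
    ∧ (⋂ j ∈ Set.Ici j₀, resInterval α η (cfQ α (2 * j)) (k j)).Nonempty := by
  -- real-valued denominators
  have hq1 : ∀ m, (1 : ℝ) ≤ (cfQ α m : ℝ) := fun m => by
    exact_mod_cast (cfQ_pos_mono α hα h0 h1 m).1
  have hqpos : ∀ m, (0 : ℝ) < (cfQ α m : ℝ) := fun m => lt_of_lt_of_le one_pos (hq1 m)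
  have hstep : ∀ j, 2 * (cfQ α (2 * j) : ℝ) ≤ (cfQ α (2 * (j + 1)) : ℝ) := fun j => by
    have := cfQ_step α hα h0 h1 (2 * j)
    have e : 2 * (j + 1) = 2 * j + 2 := by ring
    rw [e]; exact_mod_cast this
  -- part 1: nesting
  have part1 : ∀ j, j₀ ≤ j →
      resInterval α η (cfQ α (2 * (j + 1))) (k (j + 1)) ⊆ resInterval α η (cfQ α (2 * j)) (k j) := by
    intro j hj θ hθ
    obtain ⟨hIcc, hlo, hhi⟩ := hθ
    obtain ⟨hil, hiu⟩ := hincr j hj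
    set q : ℝ := (cfQ α (2 * j) : ℝ) with hqdef
    set Q : ℝ := (cfQ α (2 * (j + 1)) : ℝ) with hQdef
    have hq : (0 : ℝ) < q := hqpos _
    have hQ : (0 : ℝ) < Q := hqpos _
    have h2q : 2 * q ≤ Q := hstep j
    refine ⟨hIcc, ?_, ?_⟩
    · have key : 10 * η / Q ≤ 9 * η / q := by
        rw [div_le_div_iff₀ hQ hq]; nlinarith
      have e1 : -10 * η / Q = -(10 * η / Q) := by ring
      have e2 : -10 * η / q = -(9 * η / q) + -η / q := by ring
      linarith [hlo, hil, key, e1, e2]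
    · have k1 : -η / (4 * q) ≤ -η / (10 * q) := by
        rw [div_le_div_iff₀ (by linarith) (by linarith)]; nlinarith
      have k2 : -η / (10 * Q) ≤ 0 := by
        apply div_nonpos_of_nonpos_of_nonneg <;> [linarith; positivity]
      linarith [hhi, hiu, k1, k2]
  refine ⟨part1, ?_⟩
  -- lower bound on the fractional parts
  have hf : ∀ j, j₀ ≤ j →
      1 / 20 + 2 * η / (cfQ α (2 * j) : ℝ) ≤ Int.fract (-(k j : ℝ) * α) := by
    intro j hj
    induction j, hj using Nat.le_induction with
    | base =>
      have hq := hq1 (2 * j₀)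
      have : 2 * η / (cfQ α (2 * j₀) : ℝ) ≤ 2 * η := by
        rw [div_le_iff₀ (hqpos _)]; nlinarith
      have := hk₀.1
      linarith
    | succ j hj ih =>
      obtain ⟨hil, _⟩ := hincr j hj
      set q : ℝ := (cfQ α (2 * j) : ℝ)
      set Q : ℝ := (cfQ α (2 * (j + 1)) : ℝ)
      have hq : (0 : ℝ) < q := hqpos _
      have hQ : (0 : ℝ) < Q := hqpos _
      have h2q : 2 * q ≤ Q := hstep j
      have k1 : 2 * η / Q ≤ η / q := by
        rw [div_le_div_iff₀ hQ hq]; nlinarith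
      have e1 : (2 : ℝ) * η / q + -η / q = η / q := by ring
      linarith [hil, ih, k1, e1]
  -- each interval is nonempty
  have hne : ∀ j, j₀ ≤ j → (resInterval α η (cfQ α (2 * j)) (k j)).Nonempty := by
    intro j hj
    set q : ℝ := (cfQ α (2 * j) : ℝ) with hqdef
    have hq : (0 : ℝ) < q := hqpos _
    have hq1' : (1 : ℝ) ≤ q := hq1 _
    set f : ℝ := Int.fract (-(k j : ℝ) * α) with hfdef
    have hfl : 1 / 20 + 2 * η / q ≤ f := hf j hj
    have hfu : f < 1 := Int.fract_lt_one _
    have hd1 : η / (10 * q) ≤ 2 * η / q := by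
      rw [div_le_div_iff₀ (by linarith) hq]; nlinarith
    have hd0 : (0 : ℝ) < η / (10 * q) := by positivity
    refine ⟨(f - η / (10 * q)) / 2, ⟨⟨by linarith, by linarith⟩, ?_, ?_⟩⟩
    · have key : η / (10 * q) ≤ 10 * η / q := by
        rw [div_le_div_iff₀ (by linarith) hq]; nlinarith
      have e1 : 2 * ((f - η / (10 * q)) / 2) - f = -(η / (10 * q)) := by ring
      have e2 : -10 * η / q = -(10 * η / q) := by ring
      linarith [key, e1, e2]
    · have e1 : 2 * ((f - η / (10 * q)) / 2) - f = -(η / (10 * q)) := by ring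
      have e2 : -η / (10 * q) = -(η / (10 * q)) := by ring
      linarith [e1, e2]
  -- closedness and compactness
  have hclosed : ∀ j, IsClosed (resInterval α η (cfQ α (2 * j)) (k j)) := by
    intro j
    have : resInterval α η (cfQ α (2 * j)) (k j) =
        Set.Icc (0 : ℝ) (1 / 2) ∩
        (fun θ : ℝ => 2 * θ - Int.fract (-(k j : ℝ) * α)) ⁻¹'
          Set.Icc (-10 * η / (cfQ α (2 * j) : ℝ)) (-η / (10 * (cfQ α (2 * j) : ℝ))) := by
      ext θ
      simp only [resInterval, Set.mem_setOf_eq, Set.mem_inter_iff, Set.mem_preimage,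
        Set.mem_Icc, and_assoc]
    rw [this]
    exact isClosed_Icc.inter (IsClosed.preimage (by continuity) isClosed_Icc)
  have hsub : ∀ j, resInterval α η (cfQ α (2 * j)) (k j) ⊆ Set.Icc (0 : ℝ) (1 / 2) :=
    fun j θ hθ => hθ.1
  -- intersection via sequence
  set s : ℕ → Set ℝ := fun n => resInterval α η (cfQ α (2 * (j₀ + n))) (k (j₀ + n)) with hsdef
  have hchain : ∀ n, s (n + 1) ⊆ s n := by
    intro n
    have e : j₀ + (n + 1) = (j₀ + n) + 1 := by ring
    simp only [hsdef, e]
    exact part1 (j₀ + n) (Nat.le_add_right _ _)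
  have hns : ∀ n, (s n).Nonempty := fun n => hne _ (Nat.le_add_right _ _)
  have hcs : ∀ n, IsClosed (s n) := fun n => hclosed _
  have hcompact : IsCompact (s 0) :=
    IsCompact.of_isClosed_subset isCompact_Icc (hcs 0) (hsub _)
  obtain ⟨θ, hθ⟩ := IsCompact.nonempty_iInter_of_sequence_nonempty_isCompact_isClosed
    s hchain hns hcompact hcs
  refine ⟨θ, Set.mem_iInter₂.mpr fun j hj => ?_⟩
  have h := Set.mem_iInter.mp hθ (j - j₀)
  simp only [hsdef] at h
  rwa [Nat.add_sub_cancel' hj] at h
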